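/- For n ≥ 2, ζ = 2π/n, α ≥ 1, and integer k ≥ 1: s_k = k² s₁ - Σ_{l=1}^{k-1} l · s̄_{k-l}. -/

import Mathlib

open Finset

/-- The sum `s_k = 2^{-α} Σ_{j=1}^{n-1} sin²(kjζ/2)/sin^{α+1}(jζ/2)` with `ζ = 2π/n`. -/
noncomputable def sSum (n : ℕ) (α : ℝ) (k : ℕ) : ℝ :=
  2 ^ (-α) * ∑ j ∈ Finset.Icc 1 (n - 1),
    Real.sin (k * j * (2 * Real.pi / n) / 2) ^ 2 /
      Real.sin (j * (2 * Real.pi / n) / 2) ^ (α + 1)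

private lemma aux_trig (θ y : ℝ) :
    Real.sin ((y+2)*θ)^2 = 2*Real.sin ((y+1)*θ)^2 - Real.sin (y*θ)^2
      + 2*Real.sin θ^2*(1 - 2*Real.sin ((y+1)*θ)^2) := by
  have h1 : Real.sin θ^2 + Real.cos θ^2 = 1 := Real.sin_sq_add_cos_sq θ
  have h2 : Real.sin (y*θ)^2 + Real.cos (y*θ)^2 = 1 := Real.sin_sq_add_cos_sq (y*θ)
  rw [show (y+2)*θ = (y*θ+θ)+θ by ring, show (y+1)*θ = y*θ+θ by ring]
  simp only [Real.sin_add, Real.cos_add]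
  set s := Real.sin (y*θ)
  set c := Real.cos (y*θ)
  set p := Real.sin θ
  set q := Real.cos θ
  linear_combination (4*c^2*p^2 + 4*s*c*p*q - s^2 + s^2*q^2 + s^2*p^2)*h1 + 2*p^2*h2

private noncomputable def Tg (g : ℕ → ℝ) (k : ℕ) : ℝ :=
  ∑ m ∈ Finset.Icc 1 (k-1), ((k:ℝ)-(m:ℝ))*g m

private lemma Tg_succ (g : ℕ → ℝ) (k : ℕ) :
    Tg g (k+1) = Tg g k + ∑ m ∈ Finset.Icc 1 k, g m := by
  cases k with
  | zero => simp [Tg]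
  | succ j =>
    unfold Tg
    simp only [Nat.add_sub_cancel]
    rw [Finset.sum_Icc_succ_top (by omega : 1 ≤ j+1), Finset.sum_Icc_succ_top (by omega : 1 ≤ j+1)]
    have h : ∑ m ∈ Finset.Icc 1 j, (((j+1+1:ℕ):ℝ) - m)*g m
        = ∑ m ∈ Finset.Icc 1 j, ((((j+1:ℕ):ℝ) - m)*g m + g m) := by
      refine Finset.sum_congr rfl fun m _ => ?_
      push_cast; ring
    rw [h, Finset.sum_add_distrib]
    push_cast; ring

private lemma aux_key (θ : ℝ) (k : ℕ) :
    Real.sin ((k:ℝ)*θ)^2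
      = (k:ℝ)^2*Real.sin θ^2
        - 4*Real.sin θ^2 * ∑ m ∈ Finset.Icc 1 (k-1), ((k:ℝ)-(m:ℝ))*Real.sin ((m:ℝ)*θ)^2 := by
  set g : ℕ → ℝ := fun m => Real.sin ((m:ℝ)*θ)^2 with hg
  show Real.sin ((k:ℝ)*θ)^2 = (k:ℝ)^2*Real.sin θ^2 - 4*Real.sin θ^2 * Tg g k
  suffices h : ∀ K : ℕ,
      Real.sin ((K:ℝ)*θ)^2 = (K:ℝ)^2*Real.sin θ^2 - 4*Real.sin θ^2*Tg g K ∧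
      Real.sin (((K:ℝ)+1)*θ)^2 = ((K:ℝ)+1)^2*Real.sin θ^2 - 4*Real.sin θ^2*Tg g (K+1) from
    (h k).1
  intro K
  induction K with
  | zero =>
    constructor
    · norm_num [Tg]
    · norm_num [Tg, hg]
  | succ J ih =>
    obtain ⟨ih1, ih2⟩ := ih
    constructor
    · push_cast
      exact ih2
    · have hs := aux_trig θ (J:ℝ)
      have ha := Tg_succ g (J+1)
      have hb := Tg_succ g J
      have hc : ∑ m ∈ Finset.Icc 1 (J+1), g m = ∑ m ∈ Finset.Icc 1 J, g m + g (J+1) :=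
        Finset.sum_Icc_succ_top (by omega) g
      have hg1 : g (J+1) = Real.sin (((J:ℝ)+1)*θ)^2 := by
        show Real.sin (((J+1:ℕ):ℝ)*θ)^2 = Real.sin (((J:ℝ)+1)*θ)^2
        push_cast
        ring_nf
      push_cast
      rw [show (J:ℝ)+1+1 = (J:ℝ)+2 by ring]
      linear_combination hs + 4*Real.sin θ^2*ha - 4*Real.sin θ^2*hb + 4*Real.sin θ^2*hc
        + 4*Real.sin θ^2*hg1 + 2*ih2 - ih1

private lemma aux_reflect (k : ℕ) (f : ℕ → ℝ) :
    ∑ l ∈ Finset.Icc 1 (k-1), (l:ℝ) * f (k-l)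
      = ∑ m ∈ Finset.Icc 1 (k-1), ((k:ℝ)-(m:ℝ)) * f m := by
  refine Finset.sum_nbij' (fun l => k - l) (fun m => k - m) ?_ ?_ ?_ ?_ ?_
  · intro a ha; simp only [Finset.mem_Icc] at *; omega
  · intro a ha; simp only [Finset.mem_Icc] at *; omega
  · intro a ha; simp only [Finset.mem_Icc] at ha; omega
  · intro a ha; simp only [Finset.mem_Icc] at ha; omega
  · intro a ha
    simp only [Finset.mem_Icc] at ha
    have h2 : ((k - a : ℕ) : ℝ) = (k:ℝ) - (a:ℝ) := by
      have : a ≤ k := by omega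
      push_cast [this]; ring
    rw [h2]
    ring

theorem stmt10 (n : ℕ) (hn : 2 ≤ n) (α : ℝ) (hα : 1 ≤ α) (k : ℕ) (hk : 1 ≤ k) :
    sSum n α k
      = (k : ℝ) ^ 2 * sSum n α 1 - ∑ l ∈ Finset.Icc 1 (k - 1), (l : ℝ) * sSum n (α - 2) (k - l) := by
  simp only [sSum, Nat.cast_one, one_mul]
  simp only [Finset.mul_sum]
  rw [Finset.sum_comm, ← Finset.sum_sub_distrib]
  refine Finset.sum_congr rfl fun j hj => ?_
  simp only [Finset.mem_Icc] at hj
  have hπ := Real.pi_pos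
  have hjn : (j:ℝ) < (n:ℝ) := by exact_mod_cast (by omega : j < n)
  have hj1 : (1:ℝ) ≤ (j:ℝ) := by exact_mod_cast hj.1
  have hn0 : (0:ℝ) < (n:ℝ) := by positivity
  set θ : ℝ := (j:ℝ)*(2*Real.pi/(n:ℝ))/2 with hθ
  have hθπ : θ = (j:ℝ)*(Real.pi/(n:ℝ)) := by rw [hθ]; ring
  have hθpos : 0 < θ := by rw [hθπ]; positivity
  have hθlt : θ < Real.pi := by
    rw [hθπ]
    calc (j:ℝ)*(Real.pi/(n:ℝ)) < (n:ℝ)*(Real.pi/(n:ℝ)) := by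
          apply mul_lt_mul_of_pos_right hjn; positivity
      _ = Real.pi := by field_simp
  have hσ : 0 < Real.sin θ := Real.sin_pos_of_pos_of_lt_pi hθpos hθlt
  rw [show (k:ℝ)*(j:ℝ)*(2*Real.pi/(n:ℝ))/2 = (k:ℝ)*θ from by rw [hθ]; ring]
  have hCarg : ∀ l : ℕ, ((k-l:ℕ):ℝ)*(j:ℝ)*(2*Real.pi/(n:ℝ))/2 = ((k-l:ℕ):ℝ)*θ := fun l => by
    rw [hθ]; ring
  simp only [hCarg]
  have hre : (∑ l ∈ Finset.Icc 1 (k-1),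
        (l:ℝ) * ((2:ℝ)^(-(α-2)) * (Real.sin (((k-l:ℕ):ℝ)*θ)^2 / Real.sin θ^(α-2+1))))
      = ∑ m ∈ Finset.Icc 1 (k-1),
        ((k:ℝ)-(m:ℝ)) * ((2:ℝ)^(-(α-2)) * (Real.sin ((m:ℝ)*θ)^2 / Real.sin θ^(α-2+1))) :=
    aux_reflect k (fun m => (2:ℝ)^(-(α-2)) * (Real.sin ((m:ℝ)*θ)^2 / Real.sin θ^(α-2+1)))
  rw [hre]
  have hM : ∑ m ∈ Finset.Icc 1 (k-1),
        ((k:ℝ)-(m:ℝ)) * ((2:ℝ)^(-(α-2)) * (Real.sin ((m:ℝ)*θ)^2 / Real.sin θ^(α-2+1)))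
      = ((2:ℝ)^(-(α-2)) / Real.sin θ^(α-2+1))
        * ∑ m ∈ Finset.Icc 1 (k-1), ((k:ℝ)-(m:ℝ)) * Real.sin ((m:ℝ)*θ)^2 := by
    rw [Finset.mul_sum]
    refine Finset.sum_congr rfl fun m _ => by ring
  rw [hM]
  have hkey := aux_key θ k
  have h24 : (2:ℝ)^(-(α-2)) = 4*(2:ℝ)^(-α) := by
    rw [show -(α-2) = -α + 2 by ring, Real.rpow_add two_pos, Real.rpow_two]
    ring
  have hpow : Real.sin θ^(α+1) = Real.sin θ^(α-2+1) * Real.sin θ^2 := by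
    rw [← Real.rpow_two, ← Real.rpow_add hσ]
    ring_nf
  have hP0 : Real.sin θ^(α-2+1) ≠ 0 := (Real.rpow_pos_of_pos hσ _).ne'
  have hs0 : Real.sin θ ≠ 0 := hσ.ne'
  rw [hkey, h24, hpow]
  field_simp
  ring_nf
  simp only [mul_comm θ]
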